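/- Let $N(x) = \sum_{i=1}^m u_i \sigma(\langle w_i, x\rangle)$ be a two-layer ReLU network with $|u_i| = 1/\sqrt{m}$, let $x_0 \in \mathbb{R}^d$ with $N(x_0) > 0$, and let $z \in \mathbb{R}^d$ and $C > 0$ be such that: (i) $\langle w_i, z \rangle \geq C$ for all $i$ with $u_i < 0$, and (ii) $\langle w_i, z \rangle \leq 0$ for all $i$ with $u_i > 0$. Let $k_- = |\{i : u_i < 0, \langle w_i, x_0 \rangle \geq 0\}|$. Then $N(x_0 + z) \leq N(x_0) - \tfrac{k_- C}{\sqrt{m}}$. In particular, if $C > \tfrac{\sqrt{m} N(x_0)}{k_-}$, then $N(x_0 + z) < 0$, i.e., the perturbation $z$ flips the sign of the network output. -/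

import Mathlib

open Finset

/-- If a perturbation `z` satisfies `⟨wᵢ,z⟩ ≥ C` for all neurons with negative output
weight and `⟨wᵢ,z⟩ ≤ 0` for all neurons with positive output weight, then the output of
the two-layer ReLU network `N(x) = ∑ i, uᵢ σ(⟨wᵢ,x⟩)` (with `|uᵢ| = 1/√m`) satisfies
`N(x₀+z) ≤ N(x₀) - k₋ C/√m`, where `k₋` is the number of active negative neurons at `x₀`;
in particular if `C > √m N(x₀)/k₋` then `N(x₀+z) < 0`. -/
theorem perturbation_flips_sign
    (d m : ℕ) (u : Fin m → ℝ) (hu : ∀ i, |u i| = 1 / Real.sqrt m)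
    (w : Fin m → EuclideanSpace ℝ (Fin d)) (x₀ z : EuclideanSpace ℝ (Fin d))
    (C : ℝ) (hC : 0 < C)
    (hN : 0 < ∑ i, u i * max ((inner ℝ (w i) x₀ : ℝ)) 0)
    (hneg : ∀ i, u i < 0 → C ≤ (inner ℝ (w i) z : ℝ))
    (hpos : ∀ i, 0 < u i → (inner ℝ (w i) z : ℝ) ≤ 0)
    (kneg : ℕ)
    (hk : kneg = (univ.filter (fun i => u i < 0 ∧ (0 : ℝ) ≤ (inner ℝ (w i) x₀ : ℝ))).card) :
    (∑ i, u i * max ((inner ℝ (w i) (x₀ + z) : ℝ)) 0 ≤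
      (∑ i, u i * max ((inner ℝ (w i) x₀ : ℝ)) 0) - (kneg : ℝ) * C / Real.sqrt m) ∧
    (0 < kneg →
      Real.sqrt m * (∑ i, u i * max ((inner ℝ (w i) x₀ : ℝ)) 0) / kneg < C →
      ∑ i, u i * max ((inner ℝ (w i) (x₀ + z) : ℝ)) 0 < 0) := by
  have hm0 : 0 < m := by
    rcases Nat.eq_zero_or_pos m with h | h
    · subst h; simp at hN
    · exact h
  have hsm : (0:ℝ) < Real.sqrt m := Real.sqrt_pos.mpr (by exact_mod_cast hm0)
  set S := univ.filter (fun i => u i < 0 ∧ (0 : ℝ) ≤ (inner ℝ (w i) x₀ : ℝ)) with hS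
  have key : ∀ i, u i * max ((inner ℝ (w i) (x₀ + z) : ℝ)) 0 ≤
      u i * max ((inner ℝ (w i) x₀ : ℝ)) 0 - (if i ∈ S then C / Real.sqrt m else 0) := by
    intro i
    have hinner : (inner ℝ (w i) (x₀ + z) : ℝ) = (inner ℝ (w i) x₀ : ℝ) + (inner ℝ (w i) z : ℝ) :=
      inner_add_right _ _ _
    have hui := hu i
    have hune : u i ≠ 0 := by
      intro h
      rw [h, abs_zero] at hui
      have : (0:ℝ) < 1 / Real.sqrt m := by positivity
      linarith [hui]
    rcases lt_or_gt_of_ne hune with hneg' | hpos'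
    · have huval : u i = -(1 / Real.sqrt m) := by
        rcases abs_eq (by positivity : (0:ℝ) ≤ 1 / Real.sqrt m) |>.mp hui with h | h
        · linarith [h, (by positivity : (0:ℝ) < 1 / Real.sqrt m)]
        · exact h
      have hz := hneg i hneg'
      by_cases hx : (0:ℝ) ≤ (inner ℝ (w i) x₀ : ℝ)
      · have hmem : i ∈ S := by
          rw [hS, Finset.mem_filter]
          exact ⟨Finset.mem_univ i, hneg', hx⟩
        rw [if_pos hmem]
        have h1 : (inner ℝ (w i) x₀ : ℝ) + C ≤ max ((inner ℝ (w i) (x₀ + z) : ℝ)) 0 := by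
          rw [hinner]
          exact le_trans (by linarith) (le_max_left _ _)
        have h2 : max ((inner ℝ (w i) x₀ : ℝ)) 0 = (inner ℝ (w i) x₀ : ℝ) := max_eq_left hx
        have h3 : u i * max ((inner ℝ (w i) (x₀ + z) : ℝ)) 0
            ≤ u i * ((inner ℝ (w i) x₀ : ℝ) + C) :=
          mul_le_mul_of_nonpos_left h1 (le_of_lt hneg')
        have h4 : u i * ((inner ℝ (w i) x₀ : ℝ) + C)
            = u i * (inner ℝ (w i) x₀ : ℝ) - C / Real.sqrt m := by
          rw [huval]; ring
        rw [h2]; linarith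
      · have hmem : i ∉ S := by
          rw [hS, Finset.mem_filter]
          rintro ⟨-, -, h⟩; exact hx h
        rw [if_neg hmem]
        have h2 : max ((inner ℝ (w i) x₀ : ℝ)) 0 = 0 := max_eq_right (by linarith)
        have h3 : u i * max ((inner ℝ (w i) (x₀ + z) : ℝ)) 0 ≤ 0 :=
          mul_nonpos_of_nonpos_of_nonneg (le_of_lt hneg') (le_max_right _ _)
        rw [h2]; linarith
    · have hmem : i ∉ S := by
        rw [hS, Finset.mem_filter]
        rintro ⟨-, h, -⟩; linarith
      rw [if_neg hmem]
      have hz := hpos i hpos'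
      have h1 : max ((inner ℝ (w i) (x₀ + z) : ℝ)) 0 ≤ max ((inner ℝ (w i) x₀ : ℝ)) 0 := by
        rw [hinner]
        exact max_le_max (by linarith) le_rfl
      have := mul_le_mul_of_nonneg_left h1 (le_of_lt hpos')
      linarith
  have hsum : ∑ i, u i * max ((inner ℝ (w i) (x₀ + z) : ℝ)) 0 ≤
      ∑ i, (u i * max ((inner ℝ (w i) x₀ : ℝ)) 0 - (if i ∈ S then C / Real.sqrt m else 0)) :=
    Finset.sum_le_sum (fun i _ => key i)
  have hind : ∑ i, (if i ∈ S then C / Real.sqrt m else 0) = (kneg : ℝ) * C / Real.sqrt m := by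
    rw [Finset.sum_ite_mem, Finset.univ_inter, Finset.sum_const, hk]
    simp [nsmul_eq_mul, mul_div_assoc]
  have main : ∑ i, u i * max ((inner ℝ (w i) (x₀ + z) : ℝ)) 0 ≤
      (∑ i, u i * max ((inner ℝ (w i) x₀ : ℝ)) 0) - (kneg : ℝ) * C / Real.sqrt m := by
    rw [Finset.sum_sub_distrib, hind] at hsum
    exact hsum
  refine ⟨main, fun hkpos hClt => ?_⟩
  have hkpos' : (0:ℝ) < (kneg : ℝ) := by exact_mod_cast hkpos
  have h5 : Real.sqrt m * (∑ i, u i * max ((inner ℝ (w i) x₀ : ℝ)) 0) < C * kneg :=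
    (div_lt_iff₀ hkpos').mp hClt
  have h6 : (∑ i, u i * max ((inner ℝ (w i) x₀ : ℝ)) 0) < (kneg : ℝ) * C / Real.sqrt m := by
    rw [lt_div_iff₀ hsm]; nlinarith
  linarith
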